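/- Quantitative leakage bound (core inequality in the proof of Theorem 4.2): Let C, B > 0, let q ∈ ℝ^d, keys k_j ∈ ℝ^d and values v_j ∈ ℝ^m for j ∈ {1,…,N} with ‖v_j‖₂ ≤ C for all j, and let S ⊆ {1,…,N} with |S| = M ≥ 1. Suppose |⟨q,k_j⟩| ≤ C² for all j ∈ S and ⟨q,k_j⟩ ≤ C² − B² for all j ∉ S. Then ‖ (∑_{j∈S} exp(⟨q,k_j⟩)·v_j)/(∑_{j∈S} exp(⟨q,k_j⟩)) − (∑_{j=1}^{N} exp(⟨q,k_j⟩)·v_j)/(∑_{j=1}^{N} exp(⟨q,k_j⟩)) ‖₂ ≤ 2·N·C·exp(2C² − B²)/M. -/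

import Mathlib

open Matrix Finset

/-- Auxiliary: the attention difference is bounded by `2*C*(out-mass)/(in-mass)`. -/
theorem attn_diff_le {ι : Type*} [Fintype ι] [DecidableEq ι] {m : ℕ} (S : Finset ι)
    (w : ι → ℝ) (v : ι → EuclideanSpace ℝ (Fin m)) (C : ℝ) (hC : 0 ≤ C)
    (hw : ∀ j, 0 < w j) (hv : ∀ j, ‖v j‖ ≤ C) (hS : S.Nonempty) :
    ‖(∑ j ∈ S, w j)⁻¹ • ∑ j ∈ S, w j • v j - (∑ j, w j)⁻¹ • ∑ j, w j • v j‖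
      ≤ 2 * C * (∑ j ∈ Sᶜ, w j) / (∑ j ∈ S, w j) := by
  have hApos : 0 < ∑ j ∈ S, w j := Finset.sum_pos (fun j _ => hw j) hS
  have hE : 0 ≤ ∑ j ∈ Sᶜ, w j := Finset.sum_nonneg fun j _ => (hw j).le
  set A := ∑ j ∈ S, w j with hAdef
  set E := ∑ j ∈ Sᶜ, w j with hEdef
  have hT : ∑ j, w j = A + E := (Finset.sum_add_sum_compl S w).symm
  have hTpos : 0 < A + E := by linarith
  have hnorm : ∀ T' : Finset ι, ‖∑ j ∈ T', w j • v j‖ ≤ (∑ j ∈ T', w j) * C := by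
    intro T'
    calc ‖∑ j ∈ T', w j • v j‖ ≤ ∑ j ∈ T', ‖w j • v j‖ := norm_sum_le _ _
      _ ≤ ∑ j ∈ T', w j * C := Finset.sum_le_sum fun j _ => by
          rw [norm_smul, Real.norm_eq_abs, abs_of_pos (hw j)]
          exact mul_le_mul_of_nonneg_left (hv j) (hw j).le
      _ = (∑ j ∈ T', w j) * C := (Finset.sum_mul _ _ _).symm
  rw [hT, ← Finset.sum_add_sum_compl S (fun j => w j • v j)]
  have hinv : (A + E)⁻¹ ≤ A⁻¹ := by
    apply inv_anti₀ hApos; linarith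
  have hsplit : A⁻¹ • ∑ j ∈ S, w j • v j
      - (A + E)⁻¹ • (∑ j ∈ S, w j • v j + ∑ j ∈ Sᶜ, w j • v j)
      = (A⁻¹ - (A + E)⁻¹) • ∑ j ∈ S, w j • v j
        - (A + E)⁻¹ • ∑ j ∈ Sᶜ, w j • v j := by
    module
  rw [hsplit]
  have h1 : ‖(A⁻¹ - (A + E)⁻¹) • ∑ j ∈ S, w j • v j‖
      ≤ (A⁻¹ - (A + E)⁻¹) * (A * C) := by
    rw [norm_smul, Real.norm_eq_abs, abs_of_nonneg (sub_nonneg.mpr hinv)]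
    exact mul_le_mul_of_nonneg_left (hnorm S) (sub_nonneg.mpr hinv)
  have h2 : ‖(A + E)⁻¹ • ∑ j ∈ Sᶜ, w j • v j‖ ≤ (A + E)⁻¹ * (E * C) := by
    rw [norm_smul, Real.norm_eq_abs, abs_of_pos (inv_pos.mpr hTpos)]
    exact mul_le_mul_of_nonneg_left (hnorm Sᶜ) (inv_pos.mpr hTpos).le
  have hkey : (A⁻¹ - (A + E)⁻¹) * (A * C) + (A + E)⁻¹ * (E * C)
      = 2 * C * E / (A + E) := by
    field_simp
    ring
  calc ‖(A⁻¹ - (A + E)⁻¹) • ∑ j ∈ S, w j • v j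
        - (A + E)⁻¹ • ∑ j ∈ Sᶜ, w j • v j‖
      ≤ ‖(A⁻¹ - (A + E)⁻¹) • ∑ j ∈ S, w j • v j‖
        + ‖(A + E)⁻¹ • ∑ j ∈ Sᶜ, w j • v j‖ := norm_sub_le _ _
    _ ≤ (A⁻¹ - (A + E)⁻¹) * (A * C) + (A + E)⁻¹ * (E * C) := add_le_add h1 h2
    _ = 2 * C * E / (A + E) := hkey
    _ ≤ 2 * C * E / A := by
        apply div_le_div_of_nonneg_left (by positivity) hApos (by linarith)

/-- Quantitative leakage bound: if `‖v_j‖₂ ≤ C` for all `j`, the in-block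
scores satisfy `|⟨q,k_j⟩| ≤ C²` for `j ∈ S` (with `|S| = M ≥ 1`) and the
out-of-block scores satisfy `⟨q,k_j⟩ ≤ C² - B²` for `j ∉ S`, then the attention
output over `S` differs from the full attention output by at most
`2·N·C·exp(2C² - B²)/M`. -/
theorem quantitative_leakage_bound {d m N : ℕ} (C B : ℝ) (hC : 0 < C) (hB : 0 < B)
    (q : Fin d → ℝ) (k : Fin N → Fin d → ℝ) (v : Fin N → EuclideanSpace ℝ (Fin m))
    (hv : ∀ j, ‖v j‖ ≤ C)
    (S : Finset (Fin N)) (M : ℕ) (hSM : S.card = M) (hM : 1 ≤ M)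
    (hin : ∀ j ∈ S, |q ⬝ᵥ k j| ≤ C ^ 2)
    (hout : ∀ j ∉ S, q ⬝ᵥ k j ≤ C ^ 2 - B ^ 2) :
    ‖(∑ j ∈ S, Real.exp (q ⬝ᵥ k j))⁻¹ • ∑ j ∈ S, Real.exp (q ⬝ᵥ k j) • v j
      - (∑ j, Real.exp (q ⬝ᵥ k j))⁻¹ • ∑ j, Real.exp (q ⬝ᵥ k j) • v j‖
    ≤ 2 * N * C * Real.exp (2 * C ^ 2 - B ^ 2) / M := by
  have hS : S.Nonempty := Finset.card_pos.mp (by rw [hSM]; omega)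
  have hMpos : (0:ℝ) < M := by exact_mod_cast hM
  have step := attn_diff_le S (fun j => Real.exp (q ⬝ᵥ k j)) v C hC.le
    (fun j => Real.exp_pos _) hv hS
  refine step.trans ?_
  have hAlb : (M : ℝ) * Real.exp (-C ^ 2) ≤ ∑ j ∈ S, Real.exp (q ⬝ᵥ k j) := by
    rw [← hSM]
    calc (S.card : ℝ) * Real.exp (-C ^ 2) = ∑ _j ∈ S, Real.exp (-C ^ 2) := by
          rw [Finset.sum_const, nsmul_eq_mul]
      _ ≤ ∑ j ∈ S, Real.exp (q ⬝ᵥ k j) := Finset.sum_le_sum fun j hj => by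
          apply Real.exp_le_exp.mpr
          have := abs_le.mp (hin j hj)
          linarith [this.1]
  have hEub : ∑ j ∈ Sᶜ, Real.exp (q ⬝ᵥ k j) ≤ (N : ℝ) * Real.exp (C ^ 2 - B ^ 2) := by
    calc ∑ j ∈ Sᶜ, Real.exp (q ⬝ᵥ k j)
        ≤ ∑ _j ∈ Sᶜ, Real.exp (C ^ 2 - B ^ 2) :=
          Finset.sum_le_sum fun j hj =>
            Real.exp_le_exp.mpr (hout j (Finset.mem_compl.mp hj))
      _ = (Sᶜ.card : ℝ) * Real.exp (C ^ 2 - B ^ 2) := by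
          rw [Finset.sum_const, nsmul_eq_mul]
      _ ≤ (N : ℝ) * Real.exp (C ^ 2 - B ^ 2) := by
          have h := Finset.card_le_univ Sᶜ
          rw [Fintype.card_fin] at h
          have : (Sᶜ.card : ℝ) ≤ N := by exact_mod_cast h
          exact mul_le_mul_of_nonneg_right this (Real.exp_pos _).le
  have hstep2 : 2 * C * (∑ j ∈ Sᶜ, Real.exp (q ⬝ᵥ k j)) / ∑ j ∈ S, Real.exp (q ⬝ᵥ k j)
      ≤ 2 * C * ((N : ℝ) * Real.exp (C ^ 2 - B ^ 2)) / ((M : ℝ) * Real.exp (-C ^ 2)) := by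
    exact div_le_div₀ (by positivity)
      (mul_le_mul_of_nonneg_left hEub (by positivity)) (by positivity) hAlb
  refine hstep2.trans (le_of_eq ?_)
  rw [Real.exp_neg]
  have h2 : Real.exp (C ^ 2 - B ^ 2) * Real.exp (C ^ 2) = Real.exp (2 * C ^ 2 - B ^ 2) := by
    rw [← Real.exp_add]; ring_nf
  field_simp
  rw [← h2]
  ring
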